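/- Let d ≥ 1, let ε : ℝ^d → ℝ be Lebesgue measurable, let η₀, η₁ ∈ ℝ, and define the weight w(p) = e^{η₀ + η₁ ε(p)} / (e^{η₀ + η₁ ε(p)} + 1)². Assume w, w·ε and w·ε² are Lebesgue integrable on ℝ^d and that ε is not Lebesgue-almost-everywhere equal to a constant. Then the 2×2 matrix J with entries J₁₁ = −∫ w dp, J₁₂ = J₂₁ = −∫ w·ε dp, J₂₂ = −∫ w·ε² dp is negative definite. (This is the Jacobian of the density–energy constraints with respect to the Lagrange multipliers (η₀, η₁).) -/

import Mathlib

open MeasureTheory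

/-- The Jacobian of the density–energy constraints with respect to the Lagrange
multipliers `(η₀, η₁)`, namely the 2×2 matrix with entries `−∫ w ε^{i+j} dp`
(`w = e^{η₀+η₁ε}/(e^{η₀+η₁ε}+1)²`), is negative definite provided the band `ε`
is not a.e. constant. -/
theorem constraint_jacobian_negDef (d : ℕ) (hd : 1 ≤ d)
    (ε : EuclideanSpace ℝ (Fin d) → ℝ) (hεm : Measurable ε) (η₀ η₁ : ℝ)
    (w : EuclideanSpace ℝ (Fin d) → ℝ)
    (hw : ∀ p, w p = Real.exp (η₀ + η₁ * ε p) / (Real.exp (η₀ + η₁ * ε p) + 1) ^ 2)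
    (hw1 : Integrable w)
    (hw2 : Integrable (fun p => w p * ε p))
    (hw3 : Integrable (fun p => w p * ε p ^ 2))
    (hεc : ¬ ∃ c : ℝ, ε =ᵐ[volume] fun _ => c)
    (J : Matrix (Fin 2) (Fin 2) ℝ)
    (hJ : J = !![-(∫ p, w p), -(∫ p, w p * ε p);
                 -(∫ p, w p * ε p), -(∫ p, w p * ε p ^ 2)]) :
    ∀ x : Fin 2 → ℝ, x ≠ 0 → ∑ i, ∑ j, x i * J i j * x j < 0 := by
  intro x hx
  set a := x 0 with ha'
  set b := x 1 with hb'
  have hwpos : ∀ p, 0 < w p := by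
    intro p; rw [hw]; positivity
  set f : EuclideanSpace ℝ (Fin d) → ℝ := fun p => w p * (a + b * ε p) ^ 2 with hf
  have hfeq : f = fun p => a ^ 2 * w p + 2 * a * b * (w p * ε p) + b ^ 2 * (w p * ε p ^ 2) := by
    funext p; simp only [hf]; ring
  have hint : Integrable f := by
    rw [hfeq]
    exact ((hw1.const_mul _).add (hw2.const_mul _)).add (hw3.const_mul _)
  have hA : Integrable (fun p => a ^ 2 * w p + 2 * a * b * (w p * ε p)) := by
    exact (hw1.const_mul _).add (hw2.const_mul _)
  have hI : ∫ p, f p =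
      a ^ 2 * (∫ p, w p) + 2 * a * b * (∫ p, w p * ε p) + b ^ 2 * ∫ p, w p * ε p ^ 2 := by
    rw [hfeq, integral_add hA (hw3.const_mul _),
        integral_add (hw1.const_mul _) (hw2.const_mul _),
        integral_const_mul, integral_const_mul, integral_const_mul]
  have hsum : ∑ i, ∑ j, x i * J i j * x j = -∫ p, f p := by
    rw [hI]
    simp [hJ, Fin.sum_univ_two]
    ring
  rw [hsum, neg_lt, neg_zero]
  have hnonneg : ∀ p, 0 ≤ f p := fun p => mul_nonneg (hwpos p).le (sq_nonneg _)
  rw [integral_pos_iff_support_of_nonneg hnonneg hint]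
  by_contra hcon
  push_neg at hcon
  have hzero : volume (Function.support f) = 0 := le_antisymm hcon zero_le
  have hae : ∀ᵐ p, f p = 0 := by
    rw [ae_iff]; exact hzero
  have hae2 : ∀ᵐ p, a + b * ε p = 0 := by
    refine hae.mono fun p hp => ?_
    rcases mul_eq_zero.mp hp with h | h
    · exact absurd h (hwpos p).ne'
    · exact pow_eq_zero_iff (two_ne_zero) |>.mp h
  by_cases hb : b = 0
  · have ha : a = 0 := by
      by_contra ha
      have h' : ∀ᵐ p : EuclideanSpace ℝ (Fin d), False := by
        refine hae2.mono fun p hp => ?_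
        rw [hb] at hp; simp at hp; exact ha hp
      have huniv : (volume : Measure (EuclideanSpace ℝ (Fin d))) Set.univ = 0 := by
        simpa [ae_iff] using h'
      exact (IsOpen.measure_pos volume isOpen_univ Set.univ_nonempty).ne' huniv
    apply hx
    funext i
    fin_cases i
    · exact ha
    · exact hb
  · apply hεc
    refine ⟨-a / b, hae2.mono fun p hp => ?_⟩
    show ε p = -a / b
    rw [eq_div_iff hb]
    linarith
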